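/- Let x, y be points of the upper half-space ℍⁿ with |x−y| ≤ √((xₙ−yₙ)² + |xₙ²−yₙ²|). Then c̃_{ℍⁿ}(x,y) = |x−y| / max{xₙ, yₙ}. -/

import Mathlib

open Metric Set

def upperHalfSpace (n : ℕ) : Set (EuclideanSpace ℝ (Fin (n + 1))) :=
  {x | 0 < x (Fin.last n)}

def upperHalfSpaceBdry (n : ℕ) : Set (EuclideanSpace ℝ (Fin (n + 1))) :=
  {x | x (Fin.last n) = 0}

noncomputable def ctildeH {n : ℕ} (x y : EuclideanSpace ℝ (Fin (n + 1))) : ℝ :=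
  dist x y / sInf ((fun z => max (dist x z) (dist y z)) '' upperHalfSpaceBdry n)

lemma coord_dist_le {n : ℕ} (x z : EuclideanSpace ℝ (Fin (n + 1))) (i : Fin (n + 1)) :
    dist (x i) (z i) ≤ dist x z := by
  rw [EuclideanSpace.dist_eq]
  have h1 : dist (x i) (z i) ^ 2 ≤ ∑ j, dist (x j) (z j) ^ 2 :=
    Finset.single_le_sum (f := fun j => dist (x j) (z j) ^ 2) (fun j _ => sq_nonneg _) (Finset.mem_univ i)
  calc dist (x i) (z i) = Real.sqrt (dist (x i) (z i) ^ 2) :=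
        (Real.sqrt_sq dist_nonneg).symm
    _ ≤ _ := Real.sqrt_le_sqrt h1

lemma aux_sInf {n : ℕ} (x y : EuclideanSpace ℝ (Fin (n + 1)))
    (hx : 0 < x (Fin.last n)) (hy : 0 < y (Fin.last n))
    (hxy : y (Fin.last n) ≤ x (Fin.last n))
    (h : dist x y ≤
      Real.sqrt ((x (Fin.last n) - y (Fin.last n)) ^ 2 +
        |x (Fin.last n) ^ 2 - y (Fin.last n) ^ 2|)) :
    sInf ((fun z => max (dist x z) (dist y z)) '' upperHalfSpaceBdry n)
      = x (Fin.last n) := by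
  set L := Fin.last n
  set z₀ : EuclideanSpace ℝ (Fin (n + 1)) := WithLp.toLp 2 (Function.update x L 0) with hz₀
  have hz₀mem : z₀ ∈ upperHalfSpaceBdry n := by
    simp [upperHalfSpaceBdry, hz₀, Function.update_self, L]
  have hdxz : dist x z₀ = x L := by
    rw [EuclideanSpace.dist_eq]
    have : ∀ j, dist (x j) (z₀ j) ^ 2 = if j = L then (x L) ^ 2 else 0 := by
      intro j
      by_cases hj : j = L
      · subst hj; simp [hz₀, Function.update_self, Real.dist_eq]
      · simp [hz₀, Function.update_of_ne hj, hj]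
    rw [Finset.sum_congr rfl (fun j _ => this j), Finset.sum_ite_eq' Finset.univ L]
    simp [Real.sqrt_sq hx.le]
  -- sum splitting for dist x y
  have habs : |x L ^ 2 - y L ^ 2| = x L ^ 2 - y L ^ 2 := by
    rw [abs_of_nonneg]
    nlinarith
  have hsum : ∑ j ∈ Finset.univ.erase L, dist (x j) (y j) ^ 2 ≤ x L ^ 2 - y L ^ 2 := by
    have hd2 : dist x y ^ 2 ≤ (x L - y L) ^ 2 + (x L ^ 2 - y L ^ 2) := by
      have := Real.sq_sqrt (by positivity : (0:ℝ) ≤ (x L - y L) ^ 2 + |x L ^ 2 - y L ^ 2|)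
      nlinarith [dist_nonneg (x := x) (y := y), Real.sqrt_nonneg ((x L - y L) ^ 2 + |x L ^ 2 - y L ^ 2|)]
    have hsplit : dist x y ^ 2
        = ∑ j ∈ Finset.univ.erase L, dist (x j) (y j) ^ 2 + dist (x L) (y L) ^ 2 := by
      rw [EuclideanSpace.dist_eq, Real.sq_sqrt (by positivity)]
      exact (Finset.sum_erase_add _ _ (Finset.mem_univ L)).symm
    rw [hsplit, Real.dist_eq] at hd2
    have : |x L - y L| ^ 2 = (x L - y L) ^ 2 := sq_abs _
    nlinarith
  have hdyz : dist y z₀ ≤ x L := by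
    rw [EuclideanSpace.dist_eq]
    rw [show x L = Real.sqrt ((x L) ^ 2) from (Real.sqrt_sq hx.le).symm]
    apply Real.sqrt_le_sqrt
    have : ∑ j, dist (y j) (z₀ j) ^ 2
        = ∑ j ∈ Finset.univ.erase L, dist (y j) (x j) ^ 2 + (y L) ^ 2 := by
      rw [← Finset.sum_erase_add _ _ (Finset.mem_univ L)]
      congr 1
      · apply Finset.sum_congr rfl
        intro j hj
        rw [hz₀]; exact congrArg (fun t => dist (y j) t ^ 2) (Function.update_of_ne (Finset.mem_erase.mp hj).1 _ _)
      · simp [hz₀, Function.update_self, Real.dist_eq]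
    rw [this]
    have h2 : ∑ j ∈ Finset.univ.erase L, dist (y j) (x j) ^ 2
        = ∑ j ∈ Finset.univ.erase L, dist (x j) (y j) ^ 2 := by
      simp [dist_comm]
    rw [h2]
    nlinarith
  apply le_antisymm
  · apply csInf_le
    · refine ⟨x L, ?_⟩
      rintro a ⟨z, hz, rfl⟩
      calc x L = dist (x L) (z L) := by rw [hz, Real.dist_eq, sub_zero, abs_of_pos hx]
        _ ≤ dist x z := coord_dist_le x z L
        _ ≤ _ := le_max_left _ _
    · exact ⟨z₀, hz₀mem, by simp [hdxz, max_eq_left hdyz]⟩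
  · refine le_csInf ⟨max (dist x z₀) (dist y z₀), z₀, hz₀mem, rfl⟩ ?_
    rintro a ⟨z, hz, rfl⟩
    calc x L = dist (x L) (z L) := by rw [hz, Real.dist_eq, sub_zero, abs_of_pos hx]
      _ ≤ dist x z := coord_dist_le x z L
      _ ≤ _ := le_max_left _ _

theorem stmt_6 {n : ℕ} (x y : EuclideanSpace ℝ (Fin (n + 1)))
    (hx : x ∈ upperHalfSpace n) (hy : y ∈ upperHalfSpace n)
    (h : dist x y ≤
      Real.sqrt ((x (Fin.last n) - y (Fin.last n)) ^ 2 +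
        |x (Fin.last n) ^ 2 - y (Fin.last n) ^ 2|)) :
    ctildeH x y = dist x y / max (x (Fin.last n)) (y (Fin.last n)) := by
  rcases le_total (y (Fin.last n)) (x (Fin.last n)) with hle | hle
  · rw [ctildeH, aux_sInf x y hx hy hle h, max_eq_left hle]
  · have h' : dist y x ≤
        Real.sqrt ((y (Fin.last n) - x (Fin.last n)) ^ 2 +
          |y (Fin.last n) ^ 2 - x (Fin.last n) ^ 2|) := by
      rw [dist_comm, abs_sub_comm, show (y (Fin.last n) - x (Fin.last n)) ^ 2
        = (x (Fin.last n) - y (Fin.last n)) ^ 2 by ring]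
      exact h
    have key := aux_sInf y x hy hx hle h'
    have hset : ((fun z => max (dist x z) (dist y z)) '' upperHalfSpaceBdry n)
        = ((fun z => max (dist y z) (dist x z)) '' upperHalfSpaceBdry n) := by
      simp [max_comm]
    rw [ctildeH, hset, key, max_eq_right hle]
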